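/- For all complex numbers t, f, g, a, the function ε ↦ (ε³/2)·F_III(1+ε²t, 1+2εf, 2g/ε, −1/(2ε⁶), 2a/ε³ + 1/(2ε⁶), 1/(4ε⁶), −1/(4ε⁶)) tends to 2f³ + tf + a as ε → 0 along nonzero complex values of ε (i.e., along the punctured neighborhood filter of 0 in ℂ). -/

import Mathlib

set_option maxHeartbeats 1000000

/-- Right-hand side of the third Painlevé equation:
`F_III(x,u,v,α,β,γ,δ) = v²/u − v/x + (αu²+β)/x + γu³ + δ/u`. -/
noncomputable def FIII (x u v α β γ δ : ℂ) : ℂ :=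
  v ^ 2 / u - v / x + (α * u ^ 2 + β) / x + γ * u ^ 3 + δ / u

/-- The key algebraic identity, with the Painlevé III variables `u`, `x`
generalized to atoms so that the fractions can be combined explicitly. -/
lemma FIII_key (t f g a ε u x : ℂ) (hε0' : ε ≠ 0) (hu0 : u ≠ 0) (hx0 : x ≠ 0)
    (hu : u = 1 + 2 * ε * f) (hx : x = 1 + ε ^ 2 * t) :
    (ε ^ 3 / 2) *
          ((2 * g / ε) ^ 2 / u - (2 * g / ε) / x
            + ((-1 / (2 * ε ^ 6)) * u ^ 2 + (2 * a / ε ^ 3 + 1 / (2 * ε ^ 6))) / x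
            + (1 / (4 * ε ^ 6)) * u ^ 3 + (-1 / (4 * ε ^ 6)) / u) =
    2 * g ^ 2 * ε / u - g * ε ^ 2 / x
      + f * (1 + ε * f) * (4 * f ^ 2 + t * (u ^ 2 + 1)) / (2 * u * x)
      + a / x := by
  have hε2 : ε ^ 2 ≠ 0 := pow_ne_zero _ hε0'
  have hε3 : ε ^ 3 ≠ 0 := pow_ne_zero _ hε0'
  have hε6 : ε ^ 6 ≠ 0 := pow_ne_zero _ hε0'
  have b1 : (2 * g / ε) ^ 2 / u = (2 * g) ^ 2 / (ε ^ 2 * u) := by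
    rw [div_pow, div_div]
  have b2 : (2 * g / ε) / x = 2 * g / (ε * x) := by rw [div_div]
  have b3 : (-1 / (2 * ε ^ 6)) * u ^ 2 = -(u ^ 2) / (2 * ε ^ 6) := by
    rw [div_mul_eq_mul_div]; ring_nf
  have b4 : (2 : ℂ) * a / ε ^ 3 + 1 / (2 * ε ^ 6) = (4 * a * ε ^ 3 + 1) / (2 * ε ^ 6) := by
    rw [div_add_div _ _ hε3 (by simp [hε6]), div_eq_div_iff (by simp [hε3, hε6]) (by simp [hε6])]
    ring
  have b5 : (1 / (4 * ε ^ 6)) * u ^ 3 = u ^ 3 / (4 * ε ^ 6) := by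
    rw [div_mul_eq_mul_div, one_mul]
  have b6 : (-1 / (4 * ε ^ 6)) / u = -1 / (4 * ε ^ 6 * u) := by rw [div_div]
  rw [b1, b2, b3, b4, b5, b6]
  rw [← add_div, div_div,
    div_sub_div _ _ (by simp [hε2, hu0, hε0']) (by simp [hε0', hx0]),
    div_add_div _ _ (by simp [hε2, hu0, hε0', hx0]) (by simp [hε6, hx0]),
    div_add_div _ _ (by simp [hε2, hu0, hε0', hx0, hε6]) (by simp [hε6]),
    div_add_div _ _ (by simp [hε2, hu0, hε0', hx0, hε6]) (by simp [hε6, hu0]),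
    div_mul_div_comm,
    div_sub_div _ _ hu0 hx0, div_add_div _ _ (by simp [hu0, hx0]) (by simp [hu0, hx0]),
    div_add_div _ _ (by simp [hu0, hx0]) hx0,
    div_eq_div_iff (by simp [hε2, hu0, hε0', hx0, hε6]) (by simp [hu0, hx0])]
  subst hu hx
  ring

/-- Degeneration of Painlevé III to Painlevé II: for all `t f g a : ℂ`, the function
`ε ↦ (ε³/2)·F_III(1+ε²t, 1+2εf, 2g/ε, −1/(2ε⁶), 2a/ε³ + 1/(2ε⁶), 1/(4ε⁶), −1/(4ε⁶))`
tends to `2f³ + tf + a` as `ε → 0` along nonzero complex values. -/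
theorem stmt_3 (t f g a : ℂ) :
    Filter.Tendsto
      (fun ε : ℂ =>
        (ε ^ 3 / 2) *
          FIII (1 + ε ^ 2 * t) (1 + 2 * ε * f) (2 * g / ε)
            (-1 / (2 * ε ^ 6)) (2 * a / ε ^ 3 + 1 / (2 * ε ^ 6))
            (1 / (4 * ε ^ 6)) (-1 / (4 * ε ^ 6)))
      (nhdsWithin 0 {0}ᶜ) (nhds (2 * f ^ 3 + t * f + a)) := by
  set G : ℂ → ℂ := fun ε =>
    2 * g ^ 2 * ε / (1 + 2 * ε * f) - g * ε ^ 2 / (1 + ε ^ 2 * t)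
      + f * (1 + ε * f) * (4 * f ^ 2 + t * ((1 + 2 * ε * f) ^ 2 + 1))
          / (2 * (1 + 2 * ε * f) * (1 + ε ^ 2 * t))
      + a / (1 + ε ^ 2 * t) with hG
  have hu : Filter.Tendsto (fun ε : ℂ => 1 + 2 * ε * f) (nhds 0) (nhds 1) := by
    have : Continuous (fun ε : ℂ => 1 + 2 * ε * f) := by fun_prop
    simpa using this.tendsto 0
  have hx : Filter.Tendsto (fun ε : ℂ => 1 + ε ^ 2 * t) (nhds 0) (nhds 1) := by
    have : Continuous (fun ε : ℂ => 1 + ε ^ 2 * t) := by fun_prop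
    simpa using this.tendsto 0
  have hGlim : Filter.Tendsto G (nhds 0) (nhds (2 * f ^ 3 + t * f + a)) := by
    have h1 : (2 * f ^ 3 + t * f + a) =
        2 * g ^ 2 * 0 / 1 - g * 0 / 1
          + f * (1 + 0 * f) * (4 * f ^ 2 + t * (1 ^ 2 + 1)) / (2 * 1 * 1) + a / 1 := by
      ring
    rw [h1, hG]
    refine Filter.Tendsto.add (Filter.Tendsto.add (Filter.Tendsto.sub ?_ ?_) ?_) ?_
    · refine Filter.Tendsto.div ?_ hu one_ne_zero
      have : Continuous (fun ε : ℂ => 2 * g ^ 2 * ε) := by fun_prop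
      simpa using this.tendsto 0
    · refine Filter.Tendsto.div ?_ hx one_ne_zero
      have : Continuous (fun ε : ℂ => g * ε ^ 2) := by fun_prop
      simpa using this.tendsto 0
    · refine Filter.Tendsto.div ?_ (by simpa using (tendsto_const_nhds.mul hu).mul hx) (by norm_num)
      have : Continuous (fun ε : ℂ =>
          f * (1 + ε * f) * (4 * f ^ 2 + t * ((1 + 2 * ε * f) ^ 2 + 1))) := by fun_prop
      simpa using this.tendsto 0
    · exact Filter.Tendsto.div tendsto_const_nhds hx one_ne_zero
  refine Filter.Tendsto.congr' ?_ (hGlim.mono_left nhdsWithin_le_nhds)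
  have hune : ∀ᶠ ε in nhds (0 : ℂ), 1 + 2 * ε * f ≠ 0 := hu.eventually_ne one_ne_zero
  have hxne : ∀ᶠ ε in nhds (0 : ℂ), 1 + ε ^ 2 * t ≠ 0 := hx.eventually_ne one_ne_zero
  filter_upwards [nhdsWithin_le_nhds hune, nhdsWithin_le_nhds hxne,
    self_mem_nhdsWithin] with ε hu0 hx0 hε0
  have hε0' : ε ≠ 0 := hε0
  rw [hG, FIII]
  exact (FIII_key t f g a ε _ _ hε0' hu0 hx0 rfl rfl).symm
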